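/- Let C1 and C2 be two distinct problematic short cycles of G that are not vertex-disjoint. Then one of them is a triangle t and the other is a square s, and there exist four distinct vertices a, b, c, d of G such that t=(a,c,d), s is the 4-cycle (a,c,b,d), t and s share exactly the two edges (a,c) and (a,d), and the subgraph of G induced on {a,b,c,d} has edge set exactly {(c,d),(a,c),(a,d),(b,c),(b,d)} (in particular (a,b) is not an edge of G); such a configuration is called a double triangle. -/
import Mathlib


open Finset
open scoped Classical

namespace Paper

variable {V : Type*}

/-- `t` is the vertex set of a triangle (cycle of length 3) of `G`. -/
def IsTriangle (G : SimpleGraph V) (t : Finset V) : Prop :=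
  t.card = 3 ∧ ∀ x ∈ t, ∀ y ∈ t, x ≠ y → G.Adj x y

/-- The (three) edges of a triangle with vertex set `t`. -/
def triEdges [DecidableEq V] (t : Finset V) : Finset (Sym2 V) :=
  t.sym2.filter (fun e => ¬ e.IsDiag)

/-- Some connected component of `G` is isomorphic to the complete graph `K₄`:
there are four pairwise distinct, pairwise adjacent vertices that have no
neighbours outside of these four vertices. -/
def HasK4Component (G : SimpleGraph V) : Prop :=
  ∃ a b c d : V, a ≠ b ∧ a ≠ c ∧ a ≠ d ∧ b ≠ c ∧ b ≠ d ∧ c ≠ d ∧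
    G.Adj a b ∧ G.Adj a c ∧ G.Adj a d ∧ G.Adj b c ∧ G.Adj b d ∧ G.Adj c d ∧
    ∀ x y : V, (x = a ∨ x = b ∨ x = c ∨ x = d) → G.Adj x y →
      (y = a ∨ y = b ∨ y = c ∨ y = d)

/-- The degree of the vertex `v` in the edge set `M`, i.e. the number of edges
of `M` incident to `v`. -/
noncomputable def degIn (M : Finset (Sym2 V)) (v : V) : ℕ :=
  (M.filter (fun e => v ∈ e)).card

/-- `M` is a 2-matching of `G`: a set of edges of `G` such that every vertex is
incident to at most two of its edges. -/
def Is2Matching (G : SimpleGraph V) (M : Finset (Sym2 V)) : Prop :=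
  (∀ e ∈ M, e ∈ G.edgeSet) ∧ ∀ v : V, degIn M v ≤ 2

/-- No triangle of `G` has all three of its edges in `M`. -/
def TriangleFree [DecidableEq V] (G : SimpleGraph V) (M : Finset (Sym2 V)) : Prop :=
  ∀ t : Finset V, IsTriangle G t → ¬ triEdges t ⊆ M

/-- The triangle `t` is unproblematic: some other triangle `t'` shares an edge
with `t` and `w(t) ≤ w(t')`. -/
def TriUnprob [DecidableEq V] (G : SimpleGraph V) (w : Sym2 V → ℝ) (t : Finset V) : Prop :=
  ∃ t' : Finset V, IsTriangle G t' ∧ t' ≠ t ∧ (triEdges t ∩ triEdges t').Nonempty ∧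
    ∑ e ∈ triEdges t, w e ≤ ∑ e ∈ triEdges t', w e

/-- The triangle `t` is problematic. -/
def ProblemTri [DecidableEq V] (G : SimpleGraph V) (w : Sym2 V → ℝ) (t : Finset V) : Prop :=
  IsTriangle G t ∧ ¬ TriUnprob G w t

/-- `(a, b, c, d)` is a square (cycle of length 4) of `G`. -/
def IsSquare4 (G : SimpleGraph V) (a b c d : V) : Prop :=
  a ≠ b ∧ a ≠ c ∧ a ≠ d ∧ b ≠ c ∧ b ≠ d ∧ c ≠ d ∧
  G.Adj a b ∧ G.Adj b c ∧ G.Adj c d ∧ G.Adj d a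

/-- The four native edges of the square `(a, b, c, d)`. -/
def sqEdges [DecidableEq V] (a b c d : V) : Finset (Sym2 V) :=
  {s(a, b), s(b, c), s(c, d), s(d, a)}

/-- No square of `G` has all four of its native edges in `M`. -/
def SquareFree [DecidableEq V] (G : SimpleGraph V) (M : Finset (Sym2 V)) : Prop :=
  ∀ a b c d : V, IsSquare4 G a b c d → ¬ sqEdges a b c d ⊆ M

/-- The square `(a, b, c, d)` is unproblematic: there is another square `s'`
such that either they share exactly one edge, or they share two edges and
`w(s) ≤ w(s')`. -/
def SqUnprob [DecidableEq V] (G : SimpleGraph V) (w : Sym2 V → ℝ) (a b c d : V) : Prop :=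
  ∃ a' b' c' d' : V, IsSquare4 G a' b' c' d' ∧ sqEdges a' b' c' d' ≠ sqEdges a b c d ∧
    ((sqEdges a b c d ∩ sqEdges a' b' c' d').card = 1 ∨
     ((sqEdges a b c d ∩ sqEdges a' b' c' d').card = 2 ∧
       ∑ e ∈ sqEdges a b c d, w e ≤ ∑ e ∈ sqEdges a' b' c' d', w e))

/-- The square `(a, b, c, d)` is problematic. -/
def ProblemSq [DecidableEq V] (G : SimpleGraph V) (w : Sym2 V → ℝ) (a b c d : V) : Prop :=
  IsSquare4 G a b c d ∧ ¬ SqUnprob G w a b c d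

/-- A short cycle of a graph: a triangle `(a, b, c)` or a square `(a, b, c, d)`. -/
inductive ShortCycle (V : Type*) where
  | tri : V → V → V → ShortCycle V
  | sq : V → V → V → V → ShortCycle V

section SC

variable [DecidableEq V]

/-- The (native) edges of a short cycle. -/
def scEdges : ShortCycle V → Finset (Sym2 V)
  | ShortCycle.tri a b c => {s(a, b), s(b, c), s(c, a)}
  | ShortCycle.sq a b c d => sqEdges a b c d

/-- The vertices of a short cycle. -/
def scVerts : ShortCycle V → Finset V
  | ShortCycle.tri a b c => {a, b, c}
  | ShortCycle.sq a b c d => {a, b, c, d}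

/-- The given short cycle is an actual short cycle of `G`. -/
def IsSC (G : SimpleGraph V) : ShortCycle V → Prop
  | ShortCycle.tri a b c => a ≠ b ∧ a ≠ c ∧ b ≠ c ∧ G.Adj a b ∧ G.Adj b c ∧ G.Adj c a
  | ShortCycle.sq a b c d => IsSquare4 G a b c d

/-- The short cycle `C` is unproblematic: `C` shares exactly one edge with some
square of `G`, or `C` is a triangle and some other triangle `t'` shares an
edge with `C` and `w(C) ≤ w(t')`, or `C` is a square and some other square
`s'` shares two edges with `C` and `w(C) ≤ w(s')`. -/
def scUnprob (G : SimpleGraph V) (w : Sym2 V → ℝ) (C : ShortCycle V) : Prop :=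
  (∃ x y z u : V, IsSquare4 G x y z u ∧ sqEdges x y z u ≠ scEdges C ∧
    (scEdges C ∩ sqEdges x y z u).card = 1) ∨
  (match C with
   | ShortCycle.tri a b c =>
       ∃ t' : Finset V, IsTriangle G t' ∧ t' ≠ ({a, b, c} : Finset V) ∧
         (scEdges (ShortCycle.tri a b c) ∩ triEdges t').Nonempty ∧
         ∑ e ∈ scEdges (ShortCycle.tri a b c), w e ≤ ∑ e ∈ triEdges t', w e
   | ShortCycle.sq a b c d =>
       ∃ x y z u : V, IsSquare4 G x y z u ∧ sqEdges x y z u ≠ sqEdges a b c d ∧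
         (sqEdges a b c d ∩ sqEdges x y z u).card = 2 ∧
         ∑ e ∈ sqEdges a b c d, w e ≤ ∑ e ∈ sqEdges x y z u, w e)

end SC

set_option linter.unusedSectionVars false

section Aux
variable [Fintype V] [DecidableEq V] {G : SimpleGraph V} [DecidableRel G.Adj]

lemma deg4 (hsub : ∀ v : V, G.degree v ≤ 3) {v p q r s : V}
    (hpq : p ≠ q) (hpr : p ≠ r) (hps : p ≠ s) (hqr : q ≠ r) (hqs : q ≠ s) (hrs : r ≠ s)
    (h1 : G.Adj v p) (h2 : G.Adj v q) (h3 : G.Adj v r) (h4 : G.Adj v s) : False := by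
  have hsubN : ({p, q, r, s} : Finset V) ⊆ G.neighborFinset v := by
    intro t ht
    simp only [mem_insert, mem_singleton] at ht
    rw [SimpleGraph.mem_neighborFinset]
    rcases ht with rfl | rfl | rfl | rfl <;> assumption
  have hcard : ({p, q, r, s} : Finset V).card = 4 := by
    rw [card_insert_of_notMem (by simp [hpq, hpr, hps]),
        card_insert_of_notMem (by simp [hqr, hqs]),
        card_insert_of_notMem (by simp [hrs]), card_singleton]
  have h5 := Finset.card_le_card hsubN
  have h6 := hsub v
  rw [SimpleGraph.degree] at h6
  omega

lemma nbr3 (hsub : ∀ v : V, G.degree v ≤ 3) {x u v w y : V}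
    (huv : u ≠ v) (huw : u ≠ w) (hvw : v ≠ w)
    (h1 : G.Adj x u) (h2 : G.Adj x v) (h3 : G.Adj x w) (hy : G.Adj x y) :
    y = u ∨ y = v ∨ y = w := by
  have hsubN : ({u, v, w} : Finset V) ⊆ G.neighborFinset x := by
    intro t ht
    simp only [mem_insert, mem_singleton] at ht
    rw [SimpleGraph.mem_neighborFinset]
    rcases ht with rfl | rfl | rfl <;> assumption
  have hcard : ({u, v, w} : Finset V).card = 3 := by
    rw [card_insert_of_notMem (by simp [huv, huw]),
        card_insert_of_notMem (by simp [hvw]), card_singleton]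
  have heq : G.neighborFinset x = {u, v, w} := by
    apply (Finset.eq_of_subset_of_card_le hsubN ?_).symm
    rw [hcard]; exact hsub x
  have : y ∈ G.neighborFinset x := by rw [SimpleGraph.mem_neighborFinset]; exact hy
  rw [heq] at this
  simpa using this

lemma noAdj (hsub : ∀ v : V, G.degree v ≤ 3) (hK4 : ¬ HasK4Component G)
    {A B C D : V} (hAB : A ≠ B) (hAC : A ≠ C) (hAD : A ≠ D) (hBC : B ≠ C)
    (hBD : B ≠ D) (hCD : C ≠ D)
    (eCD : G.Adj C D) (eAC : G.Adj A C) (eAD : G.Adj A D)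
    (eBC : G.Adj B C) (eBD : G.Adj B D) : ¬ G.Adj A B := by
  intro eAB
  apply hK4
  refine ⟨A, B, C, D, hAB, hAC, hAD, hBC, hBD, hCD, eAB, eAC, eAD, eBC, eBD, eCD, ?_⟩
  intro x y hx hxy
  rcases hx with rfl | rfl | rfl | rfl
  · rcases nbr3 hsub hBC hBD hCD eAB eAC eAD hxy with rfl | rfl | rfl <;> tauto
  · rcases nbr3 hsub hAC hAD hCD eAB.symm eBC eBD hxy with rfl | rfl | rfl <;> tauto
  · rcases nbr3 hsub hAB hAD hBD eAC.symm eBC.symm eCD hxy with rfl | rfl | rfl <;> tauto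
  · rcases nbr3 hsub hAB hAC hBC eAD.symm eBD.symm eCD.symm hxy with rfl | rfl | rfl <;> tauto

lemma sq_rot {a b c d : V} (h : IsSquare4 G a b c d) : IsSquare4 G b c d a := by
  obtain ⟨h1, h2, h3, h4, h5, h6, e1, e2, e3, e4⟩ := h
  exact ⟨h4, h5, h1.symm, h6, h2.symm, h3.symm, e2, e3, e4, e1⟩

lemma sq_refl {a b c d : V} (h : IsSquare4 G a b c d) : IsSquare4 G d c b a := by
  obtain ⟨h1, h2, h3, h4, h5, h6, e1, e2, e3, e4⟩ := h
  exact ⟨h6.symm, h5.symm, h3.symm, h4.symm, h2.symm, h1.symm, e3.symm, e2.symm, e1.symm, e4.symm⟩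

lemma sqEdges_rot (a b c d : V) : sqEdges a b c d = sqEdges b c d a := by
  ext e; simp only [sqEdges, mem_insert, mem_singleton]; tauto

lemma sqEdges_refl (a b c d : V) : sqEdges a b c d = sqEdges d c b a := by
  ext e
  simp only [sqEdges, mem_insert, mem_singleton]
  constructor
  · rintro (rfl | rfl | rfl | rfl)
    · exact Or.inr (Or.inr (Or.inl Sym2.eq_swap))
    · exact Or.inr (Or.inl Sym2.eq_swap)
    · exact Or.inl Sym2.eq_swap
    · exact Or.inr (Or.inr (Or.inr Sym2.eq_swap))
  · rintro (rfl | rfl | rfl | rfl)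
    · exact Or.inr (Or.inr (Or.inl Sym2.eq_swap))
    · exact Or.inr (Or.inl Sym2.eq_swap)
    · exact Or.inl Sym2.eq_swap
    · exact Or.inr (Or.inr (Or.inr Sym2.eq_swap))

lemma sqEdges_card {a b c d : V} (h1 : a ≠ b) (h2 : a ≠ c) (h3 : a ≠ d)
    (h4 : b ≠ c) (h5 : b ≠ d) (h6 : c ≠ d) :
    (sqEdges a b c d).card = 4 := by
  rw [sqEdges,
      card_insert_of_notMem (by simp [Sym2.eq_iff]; tauto),
      card_insert_of_notMem (by simp [Sym2.eq_iff]; tauto),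
      card_insert_of_notMem (by simp [Sym2.eq_iff]; tauto), card_singleton]

lemma triSet_card {a b c : V} (hab : a ≠ b) (hac : a ≠ c) (hbc : b ≠ c) :
    ({s(a, b), s(b, c), s(c, a)} : Finset (Sym2 V)).card = 3 := by
  rw [card_insert_of_notMem (by simp [Sym2.eq_iff]; tauto),
      card_insert_of_notMem (by simp [Sym2.eq_iff]; tauto), card_singleton]

lemma triEdges_eq {a b c : V} (hab : a ≠ b) (hac : a ≠ c) (hbc : b ≠ c) :
    triEdges ({a, b, c} : Finset V) = {s(a, b), s(b, c), s(c, a)} := by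
  ext e
  induction e using Sym2.ind with
  | _ u v =>
    simp only [triEdges, mem_filter, Finset.mk_mem_sym2_iff, Sym2.mk_isDiag_iff,
      mem_insert, mem_singleton, Sym2.eq_iff]
    constructor
    · rintro ⟨⟨hu, hv⟩, huv⟩
      rcases hu with rfl | rfl | rfl <;> rcases hv with rfl | rfl | rfl <;> tauto
    · rintro ((⟨rfl, rfl⟩ | ⟨rfl, rfl⟩) | (⟨rfl, rfl⟩ | ⟨rfl, rfl⟩) | (⟨rfl, rfl⟩ | ⟨rfl, rfl⟩)) <;>
        simp_all <;> tauto

lemma isTriangle_mk {a b c : V} (hab : a ≠ b) (hac : a ≠ c) (hbc : b ≠ c)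
    (e1 : G.Adj a b) (e2 : G.Adj b c) (e3 : G.Adj c a) :
    IsTriangle G ({a, b, c} : Finset V) := by
  constructor
  · rw [card_insert_of_notMem (by simp [hab, hac]),
        card_insert_of_notMem (by simp [hbc]), card_singleton]
  · intro x hx y hy hxy
    simp only [mem_insert, mem_singleton] at hx hy
    rcases hx with rfl | rfl | rfl <;> rcases hy with rfl | rfl | rfl <;>
      first
        | exact absurd rfl hxy
        | assumption
        | exact e1.symm
        | exact e2.symm
        | exact e3.symm

lemma tri_nbrs {a b c : V} (hab : a ≠ b) (hac : a ≠ c) (hbc : b ≠ c)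
    (e1 : G.Adj a b) (e2 : G.Adj b c) (e3 : G.Adj c a)
    {v : V} (hv : v ∈ ({a, b, c} : Finset V)) :
    ∃ n₁ n₂ : V, n₁ ≠ n₂ ∧ G.Adj v n₁ ∧ G.Adj v n₂ ∧
      s(v, n₁) ∈ ({s(a, b), s(b, c), s(c, a)} : Finset (Sym2 V)) ∧
      s(v, n₂) ∈ ({s(a, b), s(b, c), s(c, a)} : Finset (Sym2 V)) := by
  simp only [mem_insert, mem_singleton] at hv
  rcases hv with rfl | rfl | rfl
  · exact ⟨b, c, hbc, e1, e3.symm, by simp [Sym2.eq_iff], by simp [Sym2.eq_iff]⟩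
  · exact ⟨a, c, hac, e1.symm, e2, by simp [Sym2.eq_iff], by simp [Sym2.eq_iff]⟩
  · exact ⟨a, b, hab, e3, e2.symm, by simp [Sym2.eq_iff], by simp [Sym2.eq_iff]⟩

lemma sq_nbrs {x y z u : V} (hsq : IsSquare4 G x y z u)
    {v : V} (hv : v ∈ ({x, y, z, u} : Finset V)) :
    ∃ n₁ n₂ : V, n₁ ≠ n₂ ∧ G.Adj v n₁ ∧ G.Adj v n₂ ∧
      s(v, n₁) ∈ sqEdges x y z u ∧ s(v, n₂) ∈ sqEdges x y z u := by
  obtain ⟨h1, h2, h3, h4, h5, h6, e1, e2, e3, e4⟩ := hsq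
  simp only [mem_insert, mem_singleton] at hv
  rcases hv with rfl | rfl | rfl | rfl
  · exact ⟨y, u, h5, e1, e4.symm, by simp [sqEdges, Sym2.eq_iff], by simp [sqEdges, Sym2.eq_iff]⟩
  · exact ⟨x, z, h2, e1.symm, e2, by simp [sqEdges, Sym2.eq_iff], by simp [sqEdges, Sym2.eq_iff]⟩
  · exact ⟨y, u, h5, e2.symm, e3, by simp [sqEdges, Sym2.eq_iff], by simp [sqEdges, Sym2.eq_iff]⟩
  · exact ⟨z, x, h2.symm, e3.symm, e4, by simp [sqEdges, Sym2.eq_iff], by simp [sqEdges, Sym2.eq_iff]⟩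

lemma four_nbrs (hsub : ∀ v : V, G.degree v ≤ 3) {v n₁ n₂ m₁ m₂ : V}
    (h12 : n₁ ≠ n₂) (h34 : m₁ ≠ m₂) {E₁ E₂ : Finset (Sym2 V)}
    (hd : E₁ ∩ E₂ = ∅)
    (f1 : s(v, n₁) ∈ E₁) (f2 : s(v, n₂) ∈ E₁) (g1 : s(v, m₁) ∈ E₂) (g2 : s(v, m₂) ∈ E₂)
    (a1 : G.Adj v n₁) (a2 : G.Adj v n₂) (a3 : G.Adj v m₁) (a4 : G.Adj v m₂) : False := by
  have cross : ∀ n m : V, s(v, n) ∈ E₁ → s(v, m) ∈ E₂ → n ≠ m := by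
    rintro n m hn hm rfl
    have : s(v, n) ∈ E₁ ∩ E₂ := mem_inter.2 ⟨hn, hm⟩
    simp [hd] at this
  exact deg4 hsub h12 (cross _ _ f1 g1) (cross _ _ f1 g2) (cross _ _ f2 g1)
    (cross _ _ f2 g2) h34 a1 a2 a3 a4

lemma sqE2 (a b c d : V) : sqEdges a b c d = sqEdges c d a b :=
  (sqEdges_rot a b c d).trans (sqEdges_rot b c d a)

lemma sqE3 (a b c d : V) : sqEdges a b c d = sqEdges d a b c :=
  (sqE2 a b c d).trans (sqEdges_rot c d a b)

lemma sqE5 (a b c d : V) : sqEdges a b c d = sqEdges c b a d :=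
  (sqEdges_refl a b c d).trans (sqEdges_rot d c b a)

lemma sqE6 (a b c d : V) : sqEdges a b c d = sqEdges b a d c :=
  (sqE5 a b c d).trans (sqEdges_rot c b a d)

lemma sqE7 (a b c d : V) : sqEdges a b c d = sqEdges a d c b :=
  (sqE6 a b c d).trans (sqEdges_rot b a d c)

lemma anchor {x y z u p q : V} (hsq : IsSquare4 G x y z u)
    (h : s(p, q) ∈ sqEdges x y z u) :
    ∃ z' u' : V, IsSquare4 G p q z' u' ∧ sqEdges p q z' u' = sqEdges x y z u := by
  simp only [sqEdges, mem_insert, mem_singleton, Sym2.eq_iff] at h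
  rcases h with (⟨rfl, rfl⟩ | ⟨rfl, rfl⟩) | (⟨rfl, rfl⟩ | ⟨rfl, rfl⟩) |
    (⟨rfl, rfl⟩ | ⟨rfl, rfl⟩) | (⟨rfl, rfl⟩ | ⟨rfl, rfl⟩)
  · exact ⟨z, u, hsq, rfl⟩
  · exact ⟨u, z, sq_rot (sq_rot (sq_refl hsq)), (sqE6 q p z u).symm⟩
  · exact ⟨u, x, sq_rot hsq, (sqEdges_rot x p q u).symm⟩
  · exact ⟨x, u, sq_rot (sq_refl hsq), (sqE5 x q p u).symm⟩
  · exact ⟨x, y, sq_rot (sq_rot hsq), (sqE2 x y p q).symm⟩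
  · exact ⟨y, x, sq_refl hsq, (sqEdges_refl x y q p).symm⟩
  · exact ⟨y, z, sq_rot (sq_rot (sq_rot hsq)), (sqE3 q y z p).symm⟩
  · exact ⟨z, y, sq_rot (sq_rot (sq_rot (sq_refl hsq))), (sqE7 p y z q).symm⟩

lemma core {x y z u p q r : V} (hsq : IsSquare4 G x y z u)
    (hpq : p ≠ q) (hpr : p ≠ r) (hqr : q ≠ r)
    (h1 : s(p, q) ∈ sqEdges x y z u) (h2 : s(p, r) ∈ sqEdges x y z u) :
    ∃ W : V, IsSquare4 G p q W r ∧ sqEdges x y z u = sqEdges p q W r := by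
  obtain ⟨z', u', hsq', hE⟩ := anchor hsq h1
  rw [← hE] at h2
  obtain ⟨d1, d2, d3, d4, d5, d6, e1, e2, e3, e4⟩ := hsq'
  have hru : r = u' := by
    simp only [sqEdges, mem_insert, mem_singleton, Sym2.eq_iff] at h2
    rcases h2 with (⟨_, h⟩ | ⟨h, _⟩) | (⟨h, _⟩ | ⟨h, _⟩) | (⟨h, _⟩ | ⟨h, _⟩) | (⟨h, _⟩ | ⟨_, h⟩)
    · exact absurd h.symm hqr
    · exact absurd h hpq
    · exact absurd h hpq
    · exact absurd h d2
    · exact absurd h d2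
    · exact absurd h d3
    · exact absurd h d3
    · exact h
  subst hru
  exact ⟨z', ⟨d1, d2, d3, d4, d5, d6, e1, e2, e3, e4⟩, hE.symm⟩

lemma tri_sq_inter {p q r W : V} (hpq : p ≠ q) (hpW : p ≠ W) (hpr : p ≠ r)
    (hqW : q ≠ W) (hqr : q ≠ r) (hWr : W ≠ r) :
    ({s(p, q), s(q, r), s(r, p)} : Finset (Sym2 V)) ∩ sqEdges p q W r =
      {s(p, q), s(p, r)} := by
  ext e
  simp only [sqEdges, mem_inter, mem_insert, mem_singleton]
  constructor
  · rintro ⟨h1, h2⟩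
    rcases h1 with rfl | rfl | rfl
    · exact Or.inl rfl
    · exfalso
      rcases h2 with h | h | h | h <;> rw [Sym2.eq_iff] at h <;> tauto
    · exact Or.inr Sym2.eq_swap
  · rintro (rfl | rfl)
    · exact ⟨Or.inl rfl, Or.inl rfl⟩
    · refine ⟨Or.inr (Or.inr Sym2.eq_swap), Or.inr (Or.inr (Or.inr Sym2.eq_swap))⟩

lemma third_edge_notMem {p q r W : V} (hpq : p ≠ q) (hpW : p ≠ W) (hpr : p ≠ r)
    (hqW : q ≠ W) (hqr : q ≠ r) (hWr : W ≠ r) :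
    s(q, r) ∉ sqEdges p q W r := by
  intro h
  simp only [sqEdges, mem_insert, mem_singleton, Sym2.eq_iff] at h
  rcases h with (⟨h, h'⟩ | ⟨_, h'⟩) | (⟨_, h'⟩ | ⟨h, _⟩) | (⟨h, _⟩ | ⟨h, h'⟩) |
    (⟨h, h'⟩ | ⟨h, _⟩)
  · exact hpq h.symm
  · exact hpr h'.symm
  · exact hWr h'.symm
  · exact hqW h
  · exact hqW h
  · exact hqr h
  · exact hqr h
  · exact hpq h.symm

lemma tri_tri (hsub : ∀ v : V, G.degree v ≤ 3) (w : Sym2 V → ℝ)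
    {a b c x y z : V}
    (hab : a ≠ b) (hac : a ≠ c) (hbc : b ≠ c)
    (e1 : G.Adj a b) (e2 : G.Adj b c) (e3 : G.Adj c a)
    (hxy : x ≠ y) (hxz : x ≠ z) (hyz : y ≠ z)
    (f1 : G.Adj x y) (f2 : G.Adj y z) (f3 : G.Adj z x)
    (hne : ({s(a, b), s(b, c), s(c, a)} : Finset (Sym2 V)) ≠ {s(x, y), s(y, z), s(z, x)})
    (hmeet : ¬ Disjoint ({a, b, c} : Finset V) ({x, y, z} : Finset V))
    (hp₁ : ¬ scUnprob G w (ShortCycle.tri a b c))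
    (hp₂ : ¬ scUnprob G w (ShortCycle.tri x y z)) : False := by
  have hvne : ({x, y, z} : Finset V) ≠ ({a, b, c} : Finset V) := by
    intro h
    apply hne
    have h1 := triEdges_eq hab hac hbc
    have h2 := triEdges_eq hxy hxz hyz
    rw [← h1, ← h2, h]
  have hvne' : ({a, b, c} : Finset V) ≠ ({x, y, z} : Finset V) := fun h => hvne h.symm
  by_cases hint : (({s(a, b), s(b, c), s(c, a)} : Finset (Sym2 V)) ∩
      {s(x, y), s(y, z), s(z, x)}).Nonempty
  · have hlt1 : ¬ (∑ e ∈ ({s(a, b), s(b, c), s(c, a)} : Finset (Sym2 V)), w e ≤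
        ∑ e ∈ triEdges ({x, y, z} : Finset V), w e) := by
      intro hle
      exact hp₁ (Or.inr ⟨{x, y, z}, isTriangle_mk hxy hxz hyz f1 f2 f3, hvne,
        (by rw [triEdges_eq hxy hxz hyz]; exact hint), hle⟩)
    have hlt2 : ¬ (∑ e ∈ ({s(x, y), s(y, z), s(z, x)} : Finset (Sym2 V)), w e ≤
        ∑ e ∈ triEdges ({a, b, c} : Finset V), w e) := by
      intro hle
      exact hp₂ (Or.inr ⟨{a, b, c}, isTriangle_mk hab hac hbc e1 e2 e3, hvne',
        (by rw [triEdges_eq hab hac hbc, Finset.inter_comm]; exact hint), hle⟩)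
    rw [triEdges_eq hxy hxz hyz] at hlt1
    rw [triEdges_eq hab hac hbc] at hlt2
    rw [not_le] at hlt1 hlt2
    linarith
  · rw [Finset.not_nonempty_iff_eq_empty] at hint
    rw [Finset.not_disjoint_iff] at hmeet
    obtain ⟨v, hv1, hv2⟩ := hmeet
    obtain ⟨n₁, n₂, h12, a1, a2, m1, m2⟩ := tri_nbrs hab hac hbc e1 e2 e3 hv1
    obtain ⟨m₁, m₂, h34, a3, a4, g1, g2⟩ := tri_nbrs hxy hxz hyz f1 f2 f3 hv2
    exact four_nbrs hsub h12 h34 hint m1 m2 g1 g2 a1 a2 a3 a4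

lemma sq_three {x y z u a b c d : V} (hsq2 : IsSquare4 G x y z u)
    (hab : a ≠ b) (hac : a ≠ c) (had : a ≠ d) (hbc : b ≠ c) (hbd : b ≠ d) (hcd : c ≠ d)
    (m1 : s(a, b) ∈ sqEdges x y z u) (m2 : s(b, c) ∈ sqEdges x y z u)
    (m3 : s(c, d) ∈ sqEdges x y z u) : sqEdges x y z u = sqEdges a b c d := by
  obtain ⟨W, hsq', hE⟩ := core hsq2 hbc hab.symm hac.symm m2 (by rw [Sym2.eq_swap]; exact m1)
  obtain ⟨d1, d2, d3, d4, d5, d6, g1, g2, g3, g4⟩ := hsq'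
  rw [hE] at m3
  have hdW : d = W := by
    simp only [sqEdges, mem_insert, mem_singleton, Sym2.eq_iff] at m3
    rcases m3 with (⟨h, h'⟩ | ⟨_, h'⟩) | (⟨_, h'⟩ | ⟨h, _⟩) | (⟨h, _⟩ | ⟨h, _⟩) |
      (⟨h, h'⟩ | ⟨h, _⟩)
    · exact absurd h.symm d1
    · exact absurd h'.symm hbd
    · exact h'
    · exact absurd h d4
    · exact absurd h d4
    · exact absurd h d5
    · exact absurd h d5
    · exact absurd h.symm d1
  subst hdW
  rw [sqEdges_rot a b c d]
  exact hE

lemma ne_adj {p q r : V} (h : p ≠ r) : s(p, q) ≠ s(q, r) := by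
  intro h'
  rcases Sym2.eq_iff.1 h' with ⟨h1, h2⟩ | ⟨h1, _⟩
  · exact h (h1.trans h2)
  · exact h h1

lemma ne_opp {p q r t : V} (h1 : p ≠ r) (h2 : p ≠ t) : s(p, q) ≠ s(r, t) := by
  intro h'
  rcases Sym2.eq_iff.1 h' with ⟨ha, _⟩ | ⟨ha, _⟩
  · exact h1 ha
  · exact h2 ha

set_option maxHeartbeats 2000000 in
lemma sq_sq (hsub : ∀ v : V, G.degree v ≤ 3) (w : Sym2 V → ℝ)
    {a b c d x y z u : V} (h1 : IsSquare4 G a b c d) (h2 : IsSquare4 G x y z u)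
    (hne : sqEdges a b c d ≠ sqEdges x y z u)
    (hmeet : ¬ Disjoint ({a, b, c, d} : Finset V) ({x, y, z, u} : Finset V))
    (hp₁ : ¬ scUnprob G w (ShortCycle.sq a b c d))
    (hp₂ : ¬ scUnprob G w (ShortCycle.sq x y z u)) : False := by
  obtain ⟨p1, p2, p3, p4, p5, p6, q1, q2, q3, q4⟩ := id h1
  have hcard1 : (sqEdges a b c d).card = 4 := sqEdges_card p1 p2 p3 p4 p5 p6
  have hk4 : (sqEdges a b c d ∩ sqEdges x y z u).card ≤ 4 := by
    calc (sqEdges a b c d ∩ sqEdges x y z u).card ≤ (sqEdges a b c d).card :=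
          card_le_card inter_subset_left
      _ = 4 := hcard1
  have hcases : (sqEdges a b c d ∩ sqEdges x y z u).card = 0 ∨
      (sqEdges a b c d ∩ sqEdges x y z u).card = 1 ∨
      (sqEdges a b c d ∩ sqEdges x y z u).card = 2 ∨
      (sqEdges a b c d ∩ sqEdges x y z u).card = 3 ∨
      (sqEdges a b c d ∩ sqEdges x y z u).card = 4 := by omega
  rcases hcases with hk | hk | hk | hk | hk
  · -- no shared edge: shared vertex has four distinct neighbours
    rw [Finset.card_eq_zero] at hk
    rw [Finset.not_disjoint_iff] at hmeet
    obtain ⟨v, hv1, hv2⟩ := hmeet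
    obtain ⟨n₁, n₂, h12, a1, a2, f1, f2⟩ := sq_nbrs h1 hv1
    obtain ⟨m₁, m₂, h34, a3, a4, g1, g2⟩ := sq_nbrs h2 hv2
    exact four_nbrs hsub h12 h34 hk f1 f2 g1 g2 a1 a2 a3 a4
  · exact hp₁ (Or.inl ⟨x, y, z, u, h2, hne.symm, hk⟩)
  · have hlt1 : ¬ (∑ e ∈ sqEdges a b c d, w e ≤ ∑ e ∈ sqEdges x y z u, w e) := by
      intro hle
      exact hp₁ (Or.inr ⟨x, y, z, u, h2, hne.symm, hk, hle⟩)
    have hlt2 : ¬ (∑ e ∈ sqEdges x y z u, w e ≤ ∑ e ∈ sqEdges a b c d, w e) := by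
      intro hle
      exact hp₂ (Or.inr ⟨a, b, c, d, h1, hne, (by rw [Finset.inter_comm]; exact hk), hle⟩)
    rw [not_le] at hlt1 hlt2
    linarith
  · -- three shared edges: impossible since the squares would be equal
    have three : ∀ e₁ e₂ e₃ e₄ : Sym2 V, sqEdges a b c d = {e₁, e₂, e₃, e₄} →
        e₁ ∉ sqEdges x y z u → e₂ ≠ e₃ → e₂ ≠ e₄ → e₃ ≠ e₄ →
        e₂ ∈ sqEdges x y z u ∧ e₃ ∈ sqEdges x y z u ∧ e₄ ∈ sqEdges x y z u := by
      intro e₁ e₂ e₃ e₄ hE he1 h23 h24 h34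
      have hss : sqEdges a b c d ∩ sqEdges x y z u ⊆ {e₂, e₃, e₄} := by
        intro e he
        rw [mem_inter, hE] at he
        obtain ⟨heE, heE2⟩ := he
        simp only [mem_insert, mem_singleton] at heE ⊢
        rcases heE with rfl | h' | h' | h'
        · exact absurd heE2 he1
        · tauto
        · tauto
        · tauto
      have hc3 : ({e₂, e₃, e₄} : Finset (Sym2 V)).card = 3 := by
        rw [card_insert_of_notMem (by simp [h23, h24]),
            card_insert_of_notMem (by simp [h34]), card_singleton]
      have heq : ({e₂, e₃, e₄} : Finset (Sym2 V)) = sqEdges a b c d ∩ sqEdges x y z u :=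
        (Finset.eq_of_subset_of_card_le hss (by omega)).symm
      have m2 : e₂ ∈ sqEdges a b c d ∩ sqEdges x y z u := by rw [← heq]; simp
      have m3 : e₃ ∈ sqEdges a b c d ∩ sqEdges x y z u := by rw [← heq]; simp
      have m4 : e₄ ∈ sqEdges a b c d ∩ sqEdges x y z u := by rw [← heq]; simp
      exact ⟨(mem_inter.1 m2).2, (mem_inter.1 m3).2, (mem_inter.1 m4).2⟩
    by_cases mab : s(a, b) ∈ sqEdges x y z u
    · by_cases mbc : s(b, c) ∈ sqEdges x y z u
      · by_cases mcd : s(c, d) ∈ sqEdges x y z u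
        · by_cases mda : s(d, a) ∈ sqEdges x y z u
          · -- all four shared
            have hss : sqEdges a b c d ⊆ sqEdges x y z u := by
              intro e he
              simp only [sqEdges, mem_insert, mem_singleton] at he
              rcases he with rfl | rfl | rfl | rfl <;> assumption
            have : (sqEdges a b c d ∩ sqEdges x y z u).card = 4 := by
              rw [Finset.inter_eq_left.2 hss, hcard1]
            omega
          · exact hne ((sq_three h2 p1 p2 p3 p4 p5 p6 mab mbc mcd).symm)
        · -- s(c,d) missing : shared edges d a, a b, b c, square (d,a,b,c)
          obtain ⟨mda, mab', mbc'⟩ := three s(c, d) s(d, a) s(a, b) s(b, c)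
            (by ext e; simp only [sqEdges, mem_insert, mem_singleton]; try tauto) mcd
            (ne_adj p5.symm) (ne_opp p5.symm p6.symm) (ne_adj p2)
          have := sq_three h2 p3.symm p5.symm p6.symm p1 p2 p4 mda mab' mbc'
          exact hne ((sqE3 a b c d).trans this.symm)
      · -- s(b,c) missing : shared c d, d a, a b, square (c,d,a,b)
        obtain ⟨mcd, mda, mab'⟩ := three s(b, c) s(c, d) s(d, a) s(a, b)
          (by ext e; simp only [sqEdges, mem_insert, mem_singleton]; try tauto) mbc
          (ne_adj p2.symm) (ne_opp p2.symm p4.symm) (ne_adj p5.symm)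
        have := sq_three h2 p6 p2.symm p4.symm p3.symm p5.symm p1 mcd mda mab'
        exact hne ((sqE2 a b c d).trans this.symm)
    · -- s(a,b) missing : shared b c, c d, d a, square (b,c,d,a)
      obtain ⟨mbc, mcd, mda⟩ := three s(a, b) s(b, c) s(c, d) s(d, a)
        (by ext e; simp only [sqEdges, mem_insert, mem_singleton]; try tauto) mab
        (ne_adj p5) (ne_opp p5 p1.symm) (ne_adj p2.symm)
      have := sq_three h2 p4 p5 p1.symm p6 p2.symm p3.symm mbc mcd mda
      exact hne ((sqEdges_rot a b c d).trans this.symm)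
  · -- four shared edges
    have hEi : sqEdges a b c d ∩ sqEdges x y z u = sqEdges a b c d := by
      apply Finset.eq_of_subset_of_card_le inter_subset_left
      omega
    have hss : sqEdges a b c d ⊆ sqEdges x y z u := by
      rw [← Finset.inter_eq_left]; exact hEi
    obtain ⟨r1, r2, r3, r4, r5, r6, _, _, _, _⟩ := id h2
    have hcard2 : (sqEdges x y z u).card = 4 := sqEdges_card r1 r2 r3 r4 r5 r6
    exact hne (Finset.eq_of_subset_of_card_le hss (by omega))

set_option maxHeartbeats 1000000 in
lemma main_aux (hsub : ∀ v : V, G.degree v ≤ 3) (hK4 : ¬ HasK4Component G) (w : Sym2 V → ℝ)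
    {a b c x y z u : V}
    (hab : a ≠ b) (hac : a ≠ c) (hbc : b ≠ c)
    (e1 : G.Adj a b) (e2 : G.Adj b c) (e3 : G.Adj c a)
    (hsq : IsSquare4 G x y z u)
    (hpt : ¬ scUnprob G w (ShortCycle.tri a b c))
    (hmeet : ¬ Disjoint ({a, b, c} : Finset V) ({x, y, z, u} : Finset V)) :
    ∃ A B C D : V, A ≠ B ∧ A ≠ C ∧ A ≠ D ∧ B ≠ C ∧ B ≠ D ∧ C ≠ D ∧
      G.Adj C D ∧ G.Adj A C ∧ G.Adj A D ∧ G.Adj B C ∧ G.Adj B D ∧ ¬ G.Adj A B ∧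
      ({s(a, b), s(b, c), s(c, a)} : Finset (Sym2 V)) = {s(A, C), s(C, D), s(D, A)} ∧
      sqEdges x y z u = {s(A, C), s(C, B), s(B, D), s(D, A)} ∧
      ({s(a, b), s(b, c), s(c, a)} : Finset (Sym2 V)) ∩ sqEdges x y z u =
        {s(A, C), s(A, D)} := by
  have hne3 : sqEdges x y z u ≠ scEdges (ShortCycle.tri a b c) := by
    intro h
    have c4 : (sqEdges x y z u).card = 4 := by
      obtain ⟨r1, r2, r3, r4, r5, r6, _, _, _, _⟩ := hsq
      exact sqEdges_card r1 r2 r3 r4 r5 r6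
    have c3 : (scEdges (ShortCycle.tri a b c)).card = 3 := triSet_card hab hac hbc
    rw [h, c3] at c4
    omega
  have clause1 : ∀ E : Finset (Sym2 V),
      ({s(a, b), s(b, c), s(c, a)} : Finset (Sym2 V)) ∩ sqEdges x y z u = E →
      E.card = 1 → False := by
    intro E hE hcard
    apply hpt
    refine Or.inl ⟨x, y, z, u, hsq, hne3, ?_⟩
    show (({s(a, b), s(b, c), s(c, a)} : Finset (Sym2 V)) ∩ sqEdges x y z u).card = 1
    rw [hE]; exact hcard
  by_cases mab : s(a, b) ∈ sqEdges x y z u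
  · by_cases mbc : s(b, c) ∈ sqEdges x y z u
    · by_cases mca : s(c, a) ∈ sqEdges x y z u
      · -- all three shared: impossible
        exfalso
        obtain ⟨W, hsq', hE2⟩ := core hsq hab hac hbc mab (by rw [Sym2.eq_swap]; exact mca)
        obtain ⟨k1, k2, k3, k4, k5, k6, g1, g2, g3, g4⟩ := hsq'
        exact third_edge_notMem k1 k2 k3 k4 k5 k6 (hE2 ▸ mbc)
      · -- shared: a b and b c; apex b
        obtain ⟨W, hsq', hE2⟩ := core hsq hbc hab.symm hac.symm mbc
          (by rw [Sym2.eq_swap]; exact mab)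
        obtain ⟨k1, k2, k3, k4, k5, k6, g1, g2, g3, g4⟩ := hsq'
        refine ⟨b, W, c, a, k2, k1, k3, k4.symm, k6, k5, e3, g1, g4.symm, g2.symm, g3,
          noAdj hsub hK4 k2 k1 k3 k4.symm k6 k5 e3 g1 g4.symm g2.symm g3, ?_, hE2, ?_⟩
        · ext e; simp only [mem_insert, mem_singleton]; tauto
        · have hperm : ({s(a, b), s(b, c), s(c, a)} : Finset (Sym2 V)) =
              {s(b, c), s(c, a), s(a, b)} := by
            ext e; simp only [mem_insert, mem_singleton]; tauto
          rw [hperm, hE2]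
          exact tri_sq_inter k1 k2 k3 k4 k5 k6
    · by_cases mca : s(c, a) ∈ sqEdges x y z u
      · -- shared: a b and c a; apex a
        obtain ⟨W, hsq', hE2⟩ := core hsq hab hac hbc mab (by rw [Sym2.eq_swap]; exact mca)
        obtain ⟨k1, k2, k3, k4, k5, k6, g1, g2, g3, g4⟩ := hsq'
        refine ⟨a, W, b, c, k2, k1, k3, k4.symm, k6, k5, e2, g1, g4.symm, g2.symm, g3,
          noAdj hsub hK4 k2 k1 k3 k4.symm k6 k5 e2 g1 g4.symm g2.symm g3, rfl, hE2, ?_⟩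
        rw [hE2]
        exact tri_sq_inter k1 k2 k3 k4 k5 k6
      · -- only a b shared
        refine absurd (clause1 {s(a, b)} ?_ (card_singleton _)) not_false
        ext e
        simp only [mem_inter, mem_insert, mem_singleton]
        constructor
        · rintro ⟨h1, h2⟩
          rcases h1 with rfl | rfl | rfl
          · rfl
          · exact absurd h2 mbc
          · exact absurd h2 mca
        · rintro rfl
          exact ⟨Or.inl rfl, mab⟩
  · by_cases mbc : s(b, c) ∈ sqEdges x y z u
    · by_cases mca : s(c, a) ∈ sqEdges x y z u
      · -- shared: b c and c a; apex c
        obtain ⟨W, hsq', hE2⟩ := core hsq hac.symm hbc.symm hab mca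
          (by rw [Sym2.eq_swap]; exact mbc)
        obtain ⟨k1, k2, k3, k4, k5, k6, g1, g2, g3, g4⟩ := hsq'
        refine ⟨c, W, a, b, k2, k1, k3, k4.symm, k6, k5, e1, g1, g4.symm, g2.symm, g3,
          noAdj hsub hK4 k2 k1 k3 k4.symm k6 k5 e1 g1 g4.symm g2.symm g3, ?_, hE2, ?_⟩
        · ext e; simp only [mem_insert, mem_singleton]; tauto
        · have hperm : ({s(a, b), s(b, c), s(c, a)} : Finset (Sym2 V)) =
              {s(c, a), s(a, b), s(b, c)} := by
            ext e; simp only [mem_insert, mem_singleton]; tauto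
          rw [hperm, hE2]
          exact tri_sq_inter k1 k2 k3 k4 k5 k6
      · -- only b c shared
        refine absurd (clause1 {s(b, c)} ?_ (card_singleton _)) not_false
        ext e
        simp only [mem_inter, mem_insert, mem_singleton]
        constructor
        · rintro ⟨h1, h2⟩
          rcases h1 with rfl | rfl | rfl
          · exact absurd h2 mab
          · rfl
          · exact absurd h2 mca
        · rintro rfl
          exact ⟨Or.inr (Or.inl rfl), mbc⟩
    · by_cases mca : s(c, a) ∈ sqEdges x y z u
      · -- only c a shared
        refine absurd (clause1 {s(c, a)} ?_ (card_singleton _)) not_false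
        ext e
        simp only [mem_inter, mem_insert, mem_singleton]
        constructor
        · rintro ⟨h1, h2⟩
          rcases h1 with rfl | rfl | rfl
          · exact absurd h2 mab
          · exact absurd h2 mbc
          · rfl
        · rintro rfl
          exact ⟨Or.inr (Or.inr rfl), mca⟩
      · -- no shared edge: shared vertex with too many neighbours
        exfalso
        have hempty : ({s(a, b), s(b, c), s(c, a)} : Finset (Sym2 V)) ∩
            sqEdges x y z u = ∅ := by
          rw [Finset.eq_empty_iff_forall_notMem]
          intro e he
          rw [mem_inter] at he
          obtain ⟨h1, h2⟩ := he
          simp only [mem_insert, mem_singleton] at h1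
          rcases h1 with rfl | rfl | rfl
          · exact mab h2
          · exact mbc h2
          · exact mca h2
        rw [Finset.not_disjoint_iff] at hmeet
        obtain ⟨v, hv1, hv2⟩ := hmeet
        obtain ⟨n₁, n₂, h12, a1, a2, f1, f2⟩ := tri_nbrs hab hac hbc e1 e2 e3 hv1
        obtain ⟨m₁, m₂, h34, a3, a4, g1, g2⟩ := sq_nbrs hsq hv2
        exact four_nbrs hsub h12 h34 hempty f1 f2 g1 g2 a1 a2 a3 a4

end Aux

/-- If `C₁` and `C₂` are two distinct problematic short
cycles of `G` that are not vertex-disjoint, then one of them is a triangle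
`t = (a,c,d)`, the other is the square `(a,c,b,d)`, they share exactly the
two edges `(a,c)` and `(a,d)`, and the subgraph of `G` induced on
`{a, b, c, d}` has edge set exactly `{(c,d), (a,c), (a,d), (b,c), (b,d)}`
(in particular `(a,b)` is not an edge of `G`): a double triangle. -/
theorem problematic_short_cycles_form_double_triangle {V : Type*} [Fintype V] [DecidableEq V]
    (G : SimpleGraph V) [DecidableRel G.Adj]
    (hsub : ∀ v : V, G.degree v ≤ 3) (hK4 : ¬ HasK4Component G)
    (w : Sym2 V → ℝ)
    (C₁ C₂ : ShortCycle V) (h₁ : IsSC G C₁) (h₂ : IsSC G C₂)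
    (hp₁ : ¬ scUnprob G w C₁) (hp₂ : ¬ scUnprob G w C₂)
    (hne : scEdges C₁ ≠ scEdges C₂)
    (hmeet : ¬ Disjoint (scVerts C₁) (scVerts C₂)) :
    ∃ a b c d : V, a ≠ b ∧ a ≠ c ∧ a ≠ d ∧ b ≠ c ∧ b ≠ d ∧ c ≠ d ∧
      G.Adj c d ∧ G.Adj a c ∧ G.Adj a d ∧ G.Adj b c ∧ G.Adj b d ∧ ¬ G.Adj a b ∧
      ((scEdges C₁ = {s(a, c), s(c, d), s(d, a)} ∧
        scEdges C₂ = {s(a, c), s(c, b), s(b, d), s(d, a)}) ∨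
       (scEdges C₂ = {s(a, c), s(c, d), s(d, a)} ∧
        scEdges C₁ = {s(a, c), s(c, b), s(b, d), s(d, a)})) ∧
      scEdges C₁ ∩ scEdges C₂ = {s(a, c), s(a, d)} := by
  rcases C₁ with ⟨a₁, b₁, c₁⟩ | ⟨x₁, y₁, z₁, u₁⟩ <;>
    rcases C₂ with ⟨a₂, b₂, c₂⟩ | ⟨x₂, y₂, z₂, u₂⟩
  · -- triangle / triangle : impossible
    obtain ⟨hab, hac, hbc, e1, e2, e3⟩ := h₁
    obtain ⟨hxy, hxz, hyz, f1, f2, f3⟩ := h₂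
    exact absurd (tri_tri hsub w hab hac hbc e1 e2 e3 hxy hxz hyz f1 f2 f3 hne hmeet hp₁ hp₂)
      not_false
  · -- triangle / square
    obtain ⟨hab, hac, hbc, e1, e2, e3⟩ := h₁
    obtain ⟨A, B, C, D, n1, n2, n3, n4, n5, n6, q1, q2, q3, q4, q5, q6, hT, hS, hI⟩ :=
      main_aux hsub hK4 w hab hac hbc e1 e2 e3 h₂ hp₁ hmeet
    exact ⟨A, B, C, D, n1, n2, n3, n4, n5, n6, q1, q2, q3, q4, q5, q6, Or.inl ⟨hT, hS⟩, hI⟩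
  · -- square / triangle
    obtain ⟨hab, hac, hbc, e1, e2, e3⟩ := h₂
    obtain ⟨A, B, C, D, n1, n2, n3, n4, n5, n6, q1, q2, q3, q4, q5, q6, hT, hS, hI⟩ :=
      main_aux hsub hK4 w hab hac hbc e1 e2 e3 h₁ hp₂ (fun hd => hmeet hd.symm)
    refine ⟨A, B, C, D, n1, n2, n3, n4, n5, n6, q1, q2, q3, q4, q5, q6, Or.inr ⟨hT, hS⟩, ?_⟩
    rw [Finset.inter_comm]
    exact hI
  · -- square / square : impossible
    exact absurd (sq_sq hsub w h₁ h₂ hne hmeet hp₁ hp₂) not_false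

end Paper
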